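/- Two distinct lines of the ceiling z=1 are parallel if and only if the closures of their central projections onto the canvas y=1 meet at a point of the horizon z=0 (assuming neither line is contained in a plane y = const). -/

import Mathlib

/-- Central projection from the origin onto the plane `y = 1`. -/
noncomputable def proj (p : ℝ × ℝ × ℝ) : ℝ × ℝ × ℝ := (p.1 / p.2.1, 1, p.2.2 / p.2.1)

/-- The line through `p` with direction `v`. -/
def lineThrough (p v : ℝ × ℝ × ℝ) : Set (ℝ × ℝ × ℝ) := {q | ∃ t : ℝ, q = p + t • v}

/-- The central projection of a set (only points with nonzero `y`-coordinate project). -/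
noncomputable def projSet (S : Set (ℝ × ℝ × ℝ)) : Set (ℝ × ℝ × ℝ) :=
  {q | ∃ r ∈ S, r.2.1 ≠ 0 ∧ q = proj r}

lemma horizon_mem (p v : ℝ × ℝ × ℝ) (hp : p.2.2 = 1) (hvz : v.2.2 = 0)
    (hvy : v.2.1 ≠ 0) (u : ℝ) :
    ((u, 1, 0) : ℝ × ℝ × ℝ) ∈ closure (projSet (lineThrough p v)) ↔ u = v.1 / v.2.1 := by
  set A : ℝ := p.1 - p.2.1 * v.1 / v.2.1 with hA
  set B : ℝ := v.1 / v.2.1 with hB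
  constructor
  · intro h
    have hsub : projSet (lineThrough p v) ⊆
        {q : ℝ × ℝ × ℝ | q.2.1 = 1 ∧ q.1 = q.2.2 * A + B} := by
      rintro q ⟨r, ⟨t, rfl⟩, hy, rfl⟩
      have hy' : p.2.1 + t * v.2.1 ≠ 0 := by
        simpa [Prod.snd_add, Prod.smul_snd, smul_eq_mul] using hy
      simp only [proj, Prod.fst_add, Prod.snd_add, Prod.smul_fst, Prod.smul_snd,
        smul_eq_mul, Set.mem_setOf_eq, hp, hvz]
      refine ⟨trivial, ?_⟩
      rw [hA, hB]
      field_simp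
      ring
    have hclosed : IsClosed {q : ℝ × ℝ × ℝ | q.2.1 = 1 ∧ q.1 = q.2.2 * A + B} := by
      apply IsClosed.inter
      · exact isClosed_eq (by fun_prop) continuous_const
      · exact isClosed_eq (by fun_prop) (by fun_prop)
    have := (closure_minimal hsub hclosed) h
    simpa using this.2
  · rintro rfl
    have key : Filter.Tendsto
        (fun n : ℕ => ((A / (n + 1) + B, 1, 1 / (n + 1)) : ℝ × ℝ × ℝ))
        Filter.atTop (nhds (B, 1, 0)) := by
      have h1 : Filter.Tendsto (fun n : ℕ => (1 : ℝ) / (n + 1)) Filter.atTop (nhds 0) :=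
        tendsto_one_div_add_atTop_nhds_zero_nat
      have h2 : Filter.Tendsto (fun n : ℕ => A / (n + 1) + B) Filter.atTop (nhds B) := by
        have : Filter.Tendsto (fun n : ℕ => A * (1 / (n + 1)) + B) Filter.atTop
            (nhds (A * 0 + B)) := ((h1.const_mul A).add tendsto_const_nhds)
        simpa [div_eq_mul_inv] using this
      exact h2.prodMk_nhds (tendsto_const_nhds.prodMk_nhds h1)
    apply isClosed_closure.mem_of_tendsto key
    apply Filter.Eventually.of_forall
    intro n
    apply subset_closure
    refine ⟨p + (((n : ℝ) + 1 - p.2.1) / v.2.1) • v, ⟨_, rfl⟩, ?_, ?_⟩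
    · simp only [Prod.snd_add, Prod.smul_snd, Prod.fst_add, Prod.smul_fst, smul_eq_mul]
      field_simp
      ring_nf
      positivity
    · have hy : p.2.1 + ((n : ℝ) + 1 - p.2.1) / v.2.1 * v.2.1 = (n : ℝ) + 1 := by
        field_simp
        ring
      have hn : ((n : ℝ) + 1) ≠ 0 := by positivity
      simp only [proj, Prod.fst_add, Prod.snd_add, Prod.smul_fst, Prod.smul_snd,
        smul_eq_mul, hy, hp, hvz, Prod.mk.injEq]
      refine ⟨?_, trivial, by simp⟩
      rw [hA, hB]
      field_simp
      ring

/-- Two distinct lines of the ceiling `z = 1` (neither contained in a plane `y = const`)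
are parallel iff the closures of their central projections onto the canvas `y = 1` meet
at a point of the horizon `z = 0`. -/
theorem stmt_13 (p₁ v₁ p₂ v₂ : ℝ × ℝ × ℝ)
    (hp₁ : p₁.2.2 = 1) (hp₂ : p₂.2.2 = 1) (hv₁z : v₁.2.2 = 0) (hv₂z : v₂.2.2 = 0)
    (hv₁ : v₁ ≠ 0) (hv₂ : v₂ ≠ 0) (hv₁y : v₁.2.1 ≠ 0) (hv₂y : v₂.2.1 ≠ 0)
    (hne : lineThrough p₁ v₁ ≠ lineThrough p₂ v₂) :
    (∃ k : ℝ, v₂ = k • v₁) ↔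
      ∃ u : ℝ, ((u, 1, 0) : ℝ × ℝ × ℝ) ∈
        closure (projSet (lineThrough p₁ v₁)) ∩ closure (projSet (lineThrough p₂ v₂)) := by
  constructor
  · rintro ⟨k, rfl⟩
    have hk : k ≠ 0 := by
      rintro rfl
      simp at hv₂
    refine ⟨v₁.1 / v₁.2.1, ?_, ?_⟩
    · exact (horizon_mem p₁ v₁ hp₁ hv₁z hv₁y _).mpr rfl
    · refine (horizon_mem p₂ (k • v₁) hp₂ (by simpa using hv₂z) (by simpa using hv₂y) _).mpr ?_
      simp only [Prod.smul_fst, Prod.smul_snd, smul_eq_mul]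
      field_simp
  · rintro ⟨u, h₁, h₂⟩
    have e₁ := (horizon_mem p₁ v₁ hp₁ hv₁z hv₁y u).mp h₁
    have e₂ := (horizon_mem p₂ v₂ hp₂ hv₂z hv₂y u).mp h₂
    refine ⟨v₂.2.1 / v₁.2.1, ?_⟩
    have hx : v₂.1 = v₂.2.1 / v₁.2.1 * v₁.1 := by
      have : v₁.1 / v₁.2.1 = v₂.1 / v₂.2.1 := by rw [← e₁, ← e₂]
      field_simp at this ⊢
      linarith [this]
    simp only [Prod.ext_iff, Prod.smul_fst, Prod.smul_snd, smul_eq_mul]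
    refine ⟨hx, by field_simp, by rw [hv₂z, hv₁z]; ring⟩
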